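/- Let H_L and H_C be finite-dimensional complex Hilbert spaces and let R be a star-subalgebra of End(H_L ⊗ H_C) satisfying End(H_L) ⊗ 1 ⊆ R. Then there exists a star-subalgebra A of End(H_C) such that R = End(H_L) ⊗ A. -/

import Mathlib

open Kronecker

open Matrix in
/-- Auxiliary: the set of `a` with `1 ⊗ₖ a ∈ R` is a star-subalgebra. -/
def rightFactorSubalgebra {l c : Type*} [Fintype l] [DecidableEq l] [Fintype c] [DecidableEq c]
    (R : StarSubalgebra ℂ (Matrix (l × c) (l × c) ℂ)) :
    StarSubalgebra ℂ (Matrix c c ℂ) where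
  carrier := {a | (1 : Matrix l l ℂ) ⊗ₖ a ∈ R}
  mul_mem' := fun {a b} ha hb => by
    show (1 : Matrix l l ℂ) ⊗ₖ (a * b) ∈ R
    have h : (1 : Matrix l l ℂ) ⊗ₖ (a * b) =
        ((1 : Matrix l l ℂ) ⊗ₖ a) * ((1 : Matrix l l ℂ) ⊗ₖ b) := by
      rw [← mul_kronecker_mul, one_mul]
    rw [h]; exact R.mul_mem ha hb
  add_mem' := fun {a b} ha hb => by
    have := R.add_mem ha hb
    rwa [← kronecker_add] at this
  algebraMap_mem' := fun r => by
    show (1 : Matrix l l ℂ) ⊗ₖ (algebraMap ℂ (Matrix c c ℂ) r) ∈ R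
    have : (1 : Matrix l l ℂ) ⊗ₖ (algebraMap ℂ (Matrix c c ℂ) r) =
        algebraMap ℂ (Matrix (l × c) (l × c) ℂ) r := by
      simp only [Algebra.algebraMap_eq_smul_one]
      rw [kronecker_smul, one_kronecker_one]
    rw [this]
    exact R.algebraMap_mem r
  star_mem' := fun {a} ha => by
    show (1 : Matrix l l ℂ) ⊗ₖ (star a) ∈ R
    have := star_mem (s := R) ha
    have h2 : star ((1 : Matrix l l ℂ) ⊗ₖ a) = (1 : Matrix l l ℂ) ⊗ₖ (star a) := by
      show ((1 : Matrix l l ℂ) ⊗ₖ a)ᴴ = (1 : Matrix l l ℂ) ⊗ₖ aᴴ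
      ext ⟨i,j⟩ ⟨k,m⟩
      simp only [conjTranspose_apply, kroneckerMap_apply, Matrix.one_apply]
      by_cases h : i = k <;> simp [h, eq_comm, mul_comm]
    rwa [h2] at this

open Matrix in
theorem kron_decomp {l c : Type*} [Fintype l] [DecidableEq l] [Fintype c] [DecidableEq c]
    (x : Matrix (l × c) (l × c) ℂ) :
    x = ∑ i : l, ∑ j : l,
      (Matrix.single i j 1) ⊗ₖ (Matrix.of fun p q => x (i,p) (j,q)) := by
  ext ⟨p,r⟩ ⟨q,s⟩
  simp [Matrix.sum_apply, kroneckerMap_apply, Matrix.single, ite_and]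

open Matrix in
theorem kron_extract {l c : Type*} [Fintype l] [DecidableEq l] [Fintype c] [DecidableEq c]
    (x : Matrix (l × c) (l × c) ℂ) (i j : l) :
    ∑ k : l, (Matrix.single k i 1 ⊗ₖ (1 : Matrix c c ℂ)) * x *
        (Matrix.single j k 1 ⊗ₖ (1 : Matrix c c ℂ)) =
      (1 : Matrix l l ℂ) ⊗ₖ (Matrix.of fun p q => x (i,p) (j,q)) := by
  ext ⟨p,r⟩ ⟨q,s⟩
  simp [Matrix.sum_apply, Matrix.mul_apply, kroneckerMap_apply, Matrix.single,
    Fintype.sum_prod_type, one_apply, ite_and, Finset.sum_ite_eq, Finset.sum_ite_eq',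
    mul_ite, ite_mul, eq_comm]

/-- if a star-subalgebra R of End(H_L ⊗ H_C) ≅ M_{l·c}(ℂ) contains
End(H_L) ⊗ 1, then R = End(H_L) ⊗ A for some star-subalgebra A of End(H_C). -/
theorem subalgebra_containing_left_factor_is_product
    {l c : Type*} [Fintype l] [DecidableEq l] [Fintype c] [DecidableEq c]
    (R : StarSubalgebra ℂ (Matrix (l × c) (l × c) ℂ))
    (hR : ∀ m : Matrix l l ℂ, m ⊗ₖ (1 : Matrix c c ℂ) ∈ R) :
    ∃ A : StarSubalgebra ℂ (Matrix c c ℂ),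
      (R : Set (Matrix (l × c) (l × c) ℂ)) =
        ↑(Submodule.span ℂ
            {x : Matrix (l × c) (l × c) ℂ |
              ∃ m : Matrix l l ℂ, ∃ a ∈ A, x = m ⊗ₖ a}) := by
  refine ⟨rightFactorSubalgebra R, ?_⟩
  apply Set.Subset.antisymm
  · -- R ⊆ span
    intro x hx
    have key : ∀ i j : l, (Matrix.of fun p q => x (i,p) (j,q)) ∈ rightFactorSubalgebra R := by
      intro i j
      show (1 : Matrix l l ℂ) ⊗ₖ (Matrix.of fun p q => x (i,p) (j,q)) ∈ R
      rw [← kron_extract x i j]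
      exact R.toSubalgebra.toSubmodule.sum_mem fun k _ =>
        R.mul_mem (R.mul_mem (hR _) hx) (hR _)
    rw [SetLike.mem_coe, show x = _ from kron_decomp x]
    exact Submodule.sum_mem _ fun i _ => Submodule.sum_mem _ fun j _ =>
      Submodule.subset_span ⟨Matrix.single i j 1, _, key i j, rfl⟩
  · -- span ⊆ R
    have : Submodule.span ℂ
        {x : Matrix (l × c) (l × c) ℂ |
          ∃ m : Matrix l l ℂ, ∃ a ∈ rightFactorSubalgebra R, x = m ⊗ₖ a} ≤
        Subalgebra.toSubmodule R.toSubalgebra := by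
      rw [Submodule.span_le]
      rintro _ ⟨m, a, ha, rfl⟩
      have : m ⊗ₖ a = (m ⊗ₖ (1 : Matrix c c ℂ)) * ((1 : Matrix l l ℂ) ⊗ₖ a) := by
        rw [← Matrix.mul_kronecker_mul, mul_one, one_mul]
      rw [SetLike.mem_coe, this]
      exact R.mul_mem (hR m) ha
    exact this
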